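/- Characterization of the identifications made by φₙ: for every n ≥ 2 and all points (t,y), (t',y') ∈ Iⁿ with t,t' ∈ [−1,1] and y,y' ∈ Iⁿ⁻¹, one has φₙ(t,y) = φₙ(t',y') if and only if φₙ₋₁(y) = φₙ₋₁(y') and (t = t' or ‖φₙ₋₁(y)‖ = 1). -/

import Mathlib

/-- The comparison map φₙ : Iⁿ → Gⁿ, defined recursively by φ₁(x₁) = x₁ and
    φₙ(t, y) = (t·√(1 − ‖φₙ₋₁(y)‖²), φₙ₋₁(y)). -/
noncomputable def phi : (n : ℕ) → EuclideanSpace ℝ (Fin n) → EuclideanSpace ℝ (Fin n)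
  | 0, x => x
  | n + 1, x =>
    WithLp.toLp 2 (Fin.cons (x 0 * Real.sqrt (1 - ‖phi n (WithLp.toLp 2 fun i => x i.succ)‖ ^ 2))
        (phi n (WithLp.toLp 2 fun i => x i.succ)) : Fin (n + 1) → ℝ)

/-- The n-cube Iⁿ = [−1,1]ⁿ, inside Euclidean n-space. -/
def cube (n : ℕ) : Set (EuclideanSpace ℝ (Fin n)) := {x | ∀ i, |x i| ≤ 1}

/-- The n-disk Dⁿ = {x : ‖x‖ ≤ 1}, the underlying space of the n-globe Gⁿ. -/
def disk (n : ℕ) : Set (EuclideanSpace ℝ (Fin n)) := {x | ‖x‖ ≤ 1}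

lemma phi_cons (n : ℕ) (t : ℝ) (y : EuclideanSpace ℝ (Fin n)) :
    phi (n + 1) (WithLp.toLp 2 (Fin.cons t y : Fin (n + 1) → ℝ))
      = WithLp.toLp 2 (Fin.cons (t * Real.sqrt (1 - ‖phi n y‖ ^ 2)) (phi n y) : Fin (n + 1) → ℝ) := by
  have h : (fun i : Fin n => (Fin.cons t y : Fin (n + 1) → ℝ) i.succ) = y.ofLp := by
    funext i; simp
  simp only [phi, WithLp.ofLp_toLp, h, WithLp.toLp_ofLp, Fin.cons_zero]

lemma norm_sq_succ (n : ℕ) (x : EuclideanSpace ℝ (Fin (n + 1)))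
    (v : EuclideanSpace ℝ (Fin n)) (hv : ∀ i, v i = x i.succ) :
    ‖x‖ ^ 2 = (x 0) ^ 2 + ‖v‖ ^ 2 := by
  rw [EuclideanSpace.norm_eq x, EuclideanSpace.norm_eq v,
    Real.sq_sqrt (by positivity), Real.sq_sqrt (by positivity), Fin.sum_univ_succ]
  simp [sq_abs, hv]

lemma phi_mem_disk (n : ℕ) (x : EuclideanSpace ℝ (Fin n)) (hx : x ∈ cube n) :
    ‖phi n x‖ ≤ 1 := by
  induction n with
  | zero => simp [phi, Subsingleton.elim x 0]
  | succ n ih =>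
    have hx0 : |x 0| ≤ 1 := hx 0
    have hxt : (WithLp.toLp 2 fun i : Fin n => x i.succ : EuclideanSpace ℝ (Fin n)) ∈ cube n := fun i => hx i.succ
    have hp := ih (WithLp.toLp 2 fun i => x i.succ) hxt
    have hnn : (0:ℝ) ≤ ‖phi n (WithLp.toLp 2 fun i => x i.succ)‖ := norm_nonneg _
    have hv : ∀ i : Fin n, (phi n (WithLp.toLp 2 fun i => x i.succ)) i = (phi (n+1) x) i.succ := by
      intro i; simp [phi]
    have h0 : (phi (n+1) x) 0 = x 0 * Real.sqrt (1 - ‖phi n (WithLp.toLp 2 fun i => x i.succ)‖ ^ 2) := by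
      simp [phi]
    have hsq : ‖phi (n+1) x‖ ^ 2 ≤ 1 := by
      rw [norm_sq_succ n (phi (n+1) x) (phi n (WithLp.toLp 2 fun i => x i.succ)) hv, h0]
      set p := ‖phi n (WithLp.toLp 2 fun i => x i.succ)‖
      have hp2 : p ^ 2 ≤ 1 := by nlinarith
      have hx2 : (x 0) ^ 2 ≤ 1 := by
        nlinarith [sq_abs (x 0), abs_nonneg (x 0), hx0]
      have hs : Real.sqrt (1 - p ^ 2) ^ 2 = 1 - p ^ 2 :=
        Real.sq_sqrt (by linarith)
      nlinarith
    nlinarith [norm_nonneg (phi (n+1) x)]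

/-- characterization of the identifications made by `φₙ` (`n ≥ 2`; here the
dimension is `n + 1` with `n ≥ 1`): `φₙ(t,y) = φₙ(t',y')` iff `φₙ₋₁(y) = φₙ₋₁(y')` and
(`t = t'` or `‖φₙ₋₁(y)‖ = 1`). -/
theorem phi_eq_iff (n : ℕ) (hn : 1 ≤ n) (t t' : ℝ) (ht : |t| ≤ 1) (ht' : |t'| ≤ 1)
    (y y' : EuclideanSpace ℝ (Fin n)) (hy : y ∈ cube n) (hy' : y' ∈ cube n) :
    phi (n + 1) (WithLp.toLp 2 (Fin.cons t y : Fin (n + 1) → ℝ))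
        = phi (n + 1) (WithLp.toLp 2 (Fin.cons t' y' : Fin (n + 1) → ℝ)) ↔
      phi n y = phi n y' ∧ (t = t' ∨ ‖phi n y‖ = 1) := by
  rw [phi_cons, phi_cons]
  have hpy : ‖phi n y‖ ≤ 1 := phi_mem_disk n y hy
  constructor
  · intro h
    have htail : phi n y = phi n y' := by
      ext i
      have := congrFun (congrArg WithLp.ofLp h) i.succ
      simpa using this
    have hhead : t * Real.sqrt (1 - ‖phi n y‖ ^ 2)
        = t' * Real.sqrt (1 - ‖phi n y'‖ ^ 2) := by
      have := congrFun (congrArg WithLp.ofLp h) 0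
      simpa using this
    refine ⟨htail, ?_⟩
    rw [← htail] at hhead
    by_cases hs : Real.sqrt (1 - ‖phi n y‖ ^ 2) = 0
    · right
      have h1 : 1 - ‖phi n y‖ ^ 2 ≤ 0 := by
        by_contra hc
        exact absurd hs (ne_of_gt (Real.sqrt_pos.mpr (lt_of_not_ge hc)))
      nlinarith [norm_nonneg (phi n y)]
    · left
      exact mul_right_cancel₀ hs hhead
  · rintro ⟨htail, hcase⟩
    rw [← htail]
    rcases hcase with h | h
    · rw [h]
    · have : Real.sqrt (1 - ‖phi n y‖ ^ 2) = 0 := by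
        rw [h]; simp
      rw [this, mul_zero, mul_zero]
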